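/- For all expressions e and f, the following are equivalent: (i) e ≤ f holds in all relation algebras (for every relational interpretation σ, σ̂(e) ⊆ σ̂(f)); (ii) every term of e is below some term of f in the term preorder, i.e., Trm(e) ⊆ ⌊Trm(f)⌋; (iii) every graph of e is below some graph of f modulo homomorphism, i.e., G(e) ⊆ ⌊G(f)⌋. -/

import Mathlib

/-- A 2-pointed labelled directed graph over label set `X`:
a finite vertex type, a set of labelled edges, and distinguished
input and output vertices. -/
structure PGraph (X : Type) where
  V : Type
  fin : Finite V
  E : Set (V × X × V)
  inp : V
  out : V

/-- A graph homomorphism preserves the input, the output, and labelled edges. -/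
def IsHom {X : Type} (G H : PGraph X) (φ : G.V → H.V) : Prop :=
  φ G.inp = H.inp ∧ φ G.out = H.out ∧
    ∀ p a q, (p, a, q) ∈ G.E → (φ p, a, φ q) ∈ H.E

/-- `gle G G'` (written `G ≲ G'`) iff there is a homomorphism from `G'` to `G`. -/
def gle {X : Type} (G G' : PGraph X) : Prop := ∃ φ : G'.V → G.V, IsHom G' G φ

/-- Graph of a variable: two vertices, one labelled edge from input to output. -/
def gvar {X : Type} (a : X) : PGraph X :=
  ⟨Bool, inferInstance, {(false, a, true)}, false, true⟩

/-- Graph of `1`: one vertex, no edges. -/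
def gone {X : Type} : PGraph X := ⟨Unit, inferInstance, ∅, (), ()⟩

/-- Graph of `⊤`: two isolated vertices. -/
def gtop {X : Type} : PGraph X := ⟨Bool, inferInstance, ∅, false, true⟩

/-- Converse of a graph: swap input and output. -/
def gconv {X : Type} (G : PGraph X) : PGraph X := ⟨G.V, G.fin, G.E, G.out, G.inp⟩

/-- Series composition: merge the output of `G` with the input of `H`. -/
def gseq {X : Type} (G H : PGraph X) : PGraph X :=
  let r : G.V ⊕ H.V → G.V ⊕ H.V → Prop :=
    fun x y => x = Sum.inl G.out ∧ y = Sum.inr H.inp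
  { V := Quot r
    fin := by
      have := G.fin; have := H.fin
      exact Finite.of_surjective (Quot.mk r) (fun q => Quot.exists_rep q)
    E := { e | (∃ p a q, (p, a, q) ∈ G.E ∧
                  e = (Quot.mk r (.inl p), a, Quot.mk r (.inl q)))
             ∨ (∃ p a q, (p, a, q) ∈ H.E ∧
                  e = (Quot.mk r (.inr p), a, Quot.mk r (.inr q))) }
    inp := Quot.mk r (.inl G.inp)
    out := Quot.mk r (.inr H.out) }

/-- Parallel composition: merge the inputs and merge the outputs. -/
def gpar {X : Type} (G H : PGraph X) : PGraph X :=
  let r : G.V ⊕ H.V → G.V ⊕ H.V → Prop :=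
    fun x y => (x = Sum.inl G.inp ∧ y = Sum.inr H.inp) ∨
               (x = Sum.inl G.out ∧ y = Sum.inr H.out)
  { V := Quot r
    fin := by
      have := G.fin; have := H.fin
      exact Finite.of_surjective (Quot.mk r) (fun q => Quot.exists_rep q)
    E := { e | (∃ p a q, (p, a, q) ∈ G.E ∧
                  e = (Quot.mk r (.inl p), a, Quot.mk r (.inl q)))
             ∨ (∃ p a q, (p, a, q) ∈ H.E ∧
                  e = (Quot.mk r (.inr p), a, Quot.mk r (.inr q))) }
    inp := Quot.mk r (.inl G.inp)
    out := Quot.mk r (.inl G.out) }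

/-- Terms: variables, composition, intersection, converse, `1` and `⊤`. -/
inductive Trm (X : Type) : Type
  | var : X → Trm X
  | comp : Trm X → Trm X → Trm X
  | inter : Trm X → Trm X → Trm X
  | conv : Trm X → Trm X
  | one : Trm X
  | top : Trm X

/-- The graph of a term. -/
def grOf {X : Type} : Trm X → PGraph X
  | .var a => gvar a
  | .comp u v => gseq (grOf u) (grOf v)
  | .inter u v => gpar (grOf u) (grOf v)
  | .conv u => gconv (grOf u)
  | .one => gone
  | .top => gtop

/-- Relational interpretation of a term, given an interpretation `σ`
of the variables as binary relations on `S`. -/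
def interp {X S : Type} (σ : X → S → S → Prop) : Trm X → S → S → Prop
  | .var a => σ a
  | .comp u v => fun i j => ∃ k, interp σ u i k ∧ interp σ v k j
  | .inter u v => fun i j => interp σ u i j ∧ interp σ v i j
  | .conv u => fun i j => interp σ u j i
  | .one => fun i j => i = j
  | .top => fun _ _ => True

/-- Expressions: terms extended with `0`, union and strict iteration. -/
inductive Expr (X : Type) : Type
  | var : X → Expr X
  | comp : Expr X → Expr X → Expr X
  | inter : Expr X → Expr X → Expr X
  | plus : Expr X → Expr X → Expr X
  | iter : Expr X → Expr X
  | conv : Expr X → Expr X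
  | zero : Expr X
  | one : Expr X
  | top : Expr X

/-- The set of terms of an expression. -/
def trms {X : Type} : Expr X → Set (Trm X)
  | .var a => {Trm.var a}
  | .comp e f => {w | ∃ u ∈ trms e, ∃ v ∈ trms f, w = Trm.comp u v}
  | .inter e f => {w | ∃ u ∈ trms e, ∃ v ∈ trms f, w = Trm.inter u v}
  | .plus e f => trms e ∪ trms f
  | .iter e => {w | ∃ u, ∃ l : List (Trm X),
      u ∈ trms e ∧ (∀ v ∈ l, v ∈ trms e) ∧ w = l.foldl Trm.comp u}
  | .conv e => {w | ∃ u ∈ trms e, w = Trm.conv u}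
  | .zero => ∅
  | .one => {Trm.one}
  | .top => {Trm.top}

/-- Relational interpretation of an expression. -/
def einterp {X S : Type} (σ : X → S → S → Prop) : Expr X → S → S → Prop
  | .var a => σ a
  | .comp e f => fun i j => ∃ k, einterp σ e i k ∧ einterp σ f k j
  | .inter e f => fun i j => einterp σ e i j ∧ einterp σ f i j
  | .plus e f => fun i j => einterp σ e i j ∨ einterp σ f i j
  | .iter e => Relation.TransGen (einterp σ e)
  | .conv e => fun i j => einterp σ e j i
  | .zero => fun _ _ => False
  | .one => fun i j => i = j
  | .top => fun _ _ => True

/-- Satisfaction of a graph in a structure: a labelling of vertices mapping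
input to `i`, output to `j`, and edges into `σ`. -/
def Sat {X S : Type} (σ : X → S → S → Prop) (G : PGraph X) (i j : S) : Prop :=
  ∃ ρ : G.V → S, ρ G.inp = i ∧ ρ G.out = j ∧
    ∀ p a q, (p, a, q) ∈ G.E → σ a (ρ p) (ρ q)

theorem interp_iff_sat {X S : Type} (σ : X → S → S → Prop) (u : Trm X) (i j : S) :
    interp σ u i j ↔ Sat σ (grOf u) i j := by
  induction u generalizing i j with
  | var a =>
    constructor
    · intro h
      refine ⟨(fun b => cond b j i : Bool → S), rfl, rfl, ?_⟩
      rintro p b q hpq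
      simp only [grOf, gvar, Set.mem_singleton_iff, Prod.mk.injEq] at hpq
      obtain ⟨rfl, rfl, rfl⟩ := hpq
      exact h
    · rintro ⟨ρ, hi, hj, he⟩
      have := he false a true rfl
      simp only [grOf, gvar] at hi hj
      rw [hi, hj] at this; exact this
  | one =>
    constructor
    · rintro rfl
      exact ⟨fun _ => i, rfl, rfl, by rintro p a q h; simp [grOf, gone] at h; exact (h : False).elim⟩
    · rintro ⟨ρ, hi, hj, _⟩
      simp only [grOf, gone] at hi hj
      rw [← hi, ← hj]
      rfl
  | top =>
    constructor
    · intro _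
      exact ⟨(fun b => cond b j i : Bool → S), rfl, rfl,
        by rintro p a q h; simp [grOf, gtop] at h; exact (h : False).elim⟩
    · intro _; trivial
  | conv u ih =>
    constructor
    · intro h
      obtain ⟨ρ, hi, hj, he⟩ := (ih j i).1 h
      exact ⟨ρ, hj, hi, he⟩
    · rintro ⟨ρ, hi, hj, he⟩
      exact (ih j i).2 ⟨ρ, hj, hi, he⟩
  | comp u v ihu ihv =>
    constructor
    · rintro ⟨k, hu, hv⟩
      obtain ⟨ρu, hui, huo, hue⟩ := (ihu i k).1 hu
      obtain ⟨ρv, hvi, hvo, hve⟩ := (ihv k j).1 hv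
      refine ⟨Quot.lift (Sum.elim ρu ρv) ?_, hui, hvo, ?_⟩
      · rintro x y ⟨rfl, rfl⟩
        rw [Sum.elim_inl, Sum.elim_inr]; exact huo.trans hvi.symm
      · rintro p a q h
        rcases h with ⟨p', a', q', hE, heq⟩ | ⟨p', a', q', hE, heq⟩ <;>
          replace heq := And.imp_right Prod.mk.inj (Prod.mk.inj heq)
        · obtain ⟨rfl, rfl, rfl⟩ := heq
          exact hue _ _ _ hE
        · obtain ⟨rfl, rfl, rfl⟩ := heq
          exact hve _ _ _ hE
    · rintro ⟨ρ, hi, hj, he⟩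
      refine ⟨ρ (Quot.mk _ (Sum.inl (grOf u).out)), ?_, ?_⟩
      · refine (ihu _ _).2 ⟨fun p => ρ (Quot.mk _ (Sum.inl p)), hi, rfl, ?_⟩
        intro p a q h
        exact he _ _ _ (Or.inl ⟨p, a, q, h, rfl⟩)
      · have key : ρ (Quot.mk _ (Sum.inl (grOf u).out)) =
            ρ (Quot.mk _ (Sum.inr (grOf v).inp)) := by
          exact congrArg ρ (Quot.sound ⟨rfl, rfl⟩)
        refine (ihv _ _).2 ⟨fun p => ρ (Quot.mk _ (Sum.inr p)), key.symm, hj, ?_⟩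
        intro p a q h
        exact he _ _ _ (Or.inr ⟨p, a, q, h, rfl⟩)
  | inter u v ihu ihv =>
    constructor
    · rintro ⟨hu, hv⟩
      obtain ⟨ρu, hui, huo, hue⟩ := (ihu i j).1 hu
      obtain ⟨ρv, hvi, hvo, hve⟩ := (ihv i j).1 hv
      refine ⟨Quot.lift (Sum.elim ρu ρv) ?_, hui, huo, ?_⟩
      · rintro x y (⟨rfl, rfl⟩ | ⟨rfl, rfl⟩)
        · rw [Sum.elim_inl, Sum.elim_inr]; exact hui.trans hvi.symm
        · rw [Sum.elim_inl, Sum.elim_inr]; exact huo.trans hvo.symm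
      · rintro p a q h
        rcases h with ⟨p', a', q', hE, heq⟩ | ⟨p', a', q', hE, heq⟩ <;>
          replace heq := And.imp_right Prod.mk.inj (Prod.mk.inj heq)
        · obtain ⟨rfl, rfl, rfl⟩ := heq
          exact hue _ _ _ hE
        · obtain ⟨rfl, rfl, rfl⟩ := heq
          exact hve _ _ _ hE
    · rintro ⟨ρ, hi, hj, he⟩
      have ki : ρ (Quot.mk _ (Sum.inl (grOf u).inp)) =
          ρ (Quot.mk _ (Sum.inr (grOf v).inp)) :=
        congrArg ρ (Quot.sound (Or.inl ⟨rfl, rfl⟩))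
      have ko : ρ (Quot.mk _ (Sum.inl (grOf u).out)) =
          ρ (Quot.mk _ (Sum.inr (grOf v).out)) :=
        congrArg ρ (Quot.sound (Or.inr ⟨rfl, rfl⟩))
      constructor
      · refine (ihu _ _).2 ⟨fun p => ρ (Quot.mk _ (Sum.inl p)), hi, hj, ?_⟩
        intro p a q h
        exact he _ _ _ (Or.inl ⟨p, a, q, h, rfl⟩)
      · refine (ihv _ _).2 ⟨fun p => ρ (Quot.mk _ (Sum.inr p)), ki.symm.trans hi,
          ko.symm.trans hj, ?_⟩
        intro p a q h
        exact he _ _ _ (Or.inr ⟨p, a, q, h, rfl⟩)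

theorem einterp_iff {X S : Type} (σ : X → S → S → Prop) (e : Expr X) (i j : S) :
    einterp σ e i j ↔ ∃ u ∈ trms e, interp σ u i j := by
  induction e generalizing i j with
  | var a => simp [einterp, trms, interp]
  | comp e f ihe ihf =>
    constructor
    · rintro ⟨k, he, hf⟩
      obtain ⟨u, hu, hui⟩ := (ihe _ _).1 he
      obtain ⟨v, hv, hvi⟩ := (ihf _ _).1 hf
      exact ⟨.comp u v, ⟨u, hu, v, hv, rfl⟩, k, hui, hvi⟩
    · rintro ⟨w, ⟨u, hu, v, hv, rfl⟩, k, hui, hvi⟩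
      exact ⟨k, (ihe _ _).2 ⟨u, hu, hui⟩, (ihf _ _).2 ⟨v, hv, hvi⟩⟩
  | inter e f ihe ihf =>
    constructor
    · rintro ⟨he, hf⟩
      obtain ⟨u, hu, hui⟩ := (ihe _ _).1 he
      obtain ⟨v, hv, hvi⟩ := (ihf _ _).1 hf
      exact ⟨.inter u v, ⟨u, hu, v, hv, rfl⟩, hui, hvi⟩
    · rintro ⟨w, ⟨u, hu, v, hv, rfl⟩, hui, hvi⟩
      exact ⟨(ihe _ _).2 ⟨u, hu, hui⟩, (ihf _ _).2 ⟨v, hv, hvi⟩⟩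
  | plus e f ihe ihf =>
    constructor
    · rintro (h | h)
      · obtain ⟨u, hu, hi⟩ := (ihe _ _).1 h; exact ⟨u, Or.inl hu, hi⟩
      · obtain ⟨u, hu, hi⟩ := (ihf _ _).1 h; exact ⟨u, Or.inr hu, hi⟩
    · rintro ⟨u, hu | hu, hi⟩
      · exact Or.inl ((ihe _ _).2 ⟨u, hu, hi⟩)
      · exact Or.inr ((ihf _ _).2 ⟨u, hu, hi⟩)
  | iter e ihe =>
    constructor
    · intro h
      induction h with
      | single h =>
        obtain ⟨u, hu, hi⟩ := (ihe _ _).1 h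
        exact ⟨_, ⟨u, [], hu, by simp, rfl⟩, hi⟩
      | tail hab hbc ih =>
        obtain ⟨w, ⟨u, l, hu, hl, rfl⟩, hi⟩ := ih
        obtain ⟨v, hv, hvi⟩ := (ihe _ _).1 hbc
        refine ⟨_, ⟨u, l ++ [v], hu, ?_, rfl⟩, ?_⟩
        · intro x hx
          rcases List.mem_append.1 hx with h | h
          · exact hl _ h
          · rw [List.mem_singleton.1 h]; exact hv
        · rw [List.foldl_append]
          exact ⟨_, hi, hvi⟩
    · rintro ⟨w, ⟨u, l, hu, hl, rfl⟩, hi⟩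
      induction l using List.reverseRecOn generalizing j with
      | nil => exact Relation.TransGen.single ((ihe _ _).2 ⟨u, hu, hi⟩)
      | append_singleton l v ih =>
        rw [List.foldl_append] at hi
        obtain ⟨k, h1, h2⟩ := hi
        exact Relation.TransGen.tail
          (ih k (fun x hx => hl x (List.mem_append.2 (Or.inl hx))) h1)
          ((ihe _ _).2 ⟨v, hl v (List.mem_append.2 (Or.inr (List.mem_singleton.2 rfl))), h2⟩)
  | conv e ihe =>
    constructor
    · intro h
      obtain ⟨u, hu, hi⟩ := (ihe _ _).1 h
      exact ⟨.conv u, ⟨u, hu, rfl⟩, hi⟩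
    · rintro ⟨w, ⟨u, hu, rfl⟩, hi⟩
      exact (ihe _ _).2 ⟨u, hu, hi⟩
  | zero => simp [einterp, trms]
  | one => simp [einterp, trms, interp]
  | top => simp [einterp, trms, interp]

/-- The three characterisations of `Rel ⊨ e ≤ f`:
validity under all relational interpretations, containment of term sets
modulo the term preorder, and containment of graph sets modulo homomorphism. -/
theorem rel_le_tfae {X : Type} (e f : Expr X) :
    ((∀ (S : Type) (σ : X → S → S → Prop) (i j : S),
        einterp σ e i j → einterp σ f i j) ↔
      (∀ u ∈ trms e, ∃ v ∈ trms f, gle (grOf u) (grOf v)))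
    ∧ ((∀ u ∈ trms e, ∃ v ∈ trms f, gle (grOf u) (grOf v)) ↔
      (∀ G ∈ grOf '' trms e, ∃ H ∈ grOf '' trms f, gle G H)) := by
  constructor
  · constructor
    · intro h u hu
      -- canonical interpretation on the graph of u
      set G := grOf u with hG
      let σ : X → G.V → G.V → Prop := fun a p q => (p, a, q) ∈ G.E
      have hui : interp σ u G.inp G.out :=
        (interp_iff_sat σ u _ _).2 ⟨id, rfl, rfl, fun p a q h => h⟩
      have hei : einterp σ e G.inp G.out := (einterp_iff σ e _ _).2 ⟨u, hu, hui⟩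
      have hfi := h G.V σ _ _ hei
      obtain ⟨v, hv, hvi⟩ := (einterp_iff σ f _ _).1 hfi
      obtain ⟨ρ, hi, hj, he⟩ := (interp_iff_sat σ v _ _).1 hvi
      exact ⟨v, hv, ρ, hi, hj, he⟩
    · intro h S σ i j hei
      obtain ⟨u, hu, hui⟩ := (einterp_iff σ e i j).1 hei
      obtain ⟨ρ, hi, hj, he⟩ := (interp_iff_sat σ u i j).1 hui
      obtain ⟨v, hv, φ, hφi, hφo, hφe⟩ := h u hu
      refine (einterp_iff σ f i j).2 ⟨v, hv, (interp_iff_sat σ v i j).2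
        ⟨ρ ∘ φ, ?_, ?_, ?_⟩⟩
      · simp [hφi, hi]
      · simp [hφo, hj]
      · intro p a q hpq
        exact he _ _ _ (hφe p a q hpq)
  · constructor
    · rintro h G ⟨u, hu, rfl⟩
      obtain ⟨v, hv, hle⟩ := h u hu
      exact ⟨grOf v, ⟨v, hv, rfl⟩, hle⟩
    · intro h u hu
      obtain ⟨H, ⟨v, hv, rfl⟩, hle⟩ := h (grOf u) ⟨u, hu, rfl⟩
      exact ⟨v, hv, hle⟩
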